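/- Let X be a T3 (regular Hausdorff) space, p ∈ X, and let D and E be preorders with cf(D) < add(E) and such that E has no maximum (add(E) < ∞). If the neighborhood filter N(p,X) is cofinally equivalent to D × E, then there is an escape sequence at p of length add(E) all of whose terms are regular open sets. -/

import Mathlib

universe u v w

/-- Two preorders are *cofinally equivalent* if there is a preorder (given here by a
reflexive transitive relation `le` on `R`) such that both are order isomorphic to
cofinal subsets of it. -/
def CofEquiv (P : Type u) (Q : Type v) [Preorder P] [Preorder Q] : Prop :=
  ∃ (R : Type (max u v)) (le : R → R → Prop),
    Reflexive le ∧ Transitive le ∧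
    ∃ (f : P → R) (g : Q → R),
      Function.Injective f ∧ Function.Injective g ∧
      (∀ a b : P, a ≤ b ↔ le (f a) (f b)) ∧
      (∀ a b : Q, a ≤ b ↔ le (g a) (g b)) ∧
      (∀ r : R, ∃ a : P, le r (f a)) ∧
      (∀ r : R, ∃ b : Q, le r (g b))

/-- The neighborhood filter of `p`, i.e. all sets whose interior contains `p`,
as a preorder under containment `⊇`. -/
def Nbhds (X : Type w) [TopologicalSpace X] (p : X) := {U : Set X // U ∈ nhds p}

instance (X : Type w) [TopologicalSpace X] (p : X) : Preorder (Nbhds X p) where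
  le U V := Subtype.val V ⊆ Subtype.val U
  le_refl _ := subset_rfl
  le_trans _ _ _ h1 h2 := Set.Subset.trans h2 h1

/-- `U` is an escape sequence at `p`: a decreasing (w.r.t. the index order) sequence
of neighborhoods of `p` whose intersection is not a neighborhood of `p`. -/
def IsEscapeSeq {X : Type w} [TopologicalSpace X] (p : X) {ι : Type u} [Preorder ι]
    (U : ι → Set X) : Prop :=
  (∀ i, U i ∈ nhds p) ∧ (∀ i j : ι, i ≤ j → U j ⊆ U i) ∧ (⋂ i, U i) ∉ nhds p

/-- The cofinality of a preorder: the least cardinality of a cofinal subset. -/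
noncomputable def cofOf (D : Type u) [Preorder D] : Cardinal.{u} :=
  sInf {c | ∃ s : Set D, (∀ d : D, ∃ x ∈ s, d ≤ x) ∧ Cardinal.mk s = c}

/-- The additivity of a preorder: the least cardinality of an unbounded subset
(equivalently, the least `λ` such that the preorder is not `λ`-directed; it is `∞`,
i.e. left undefined, precisely when there is a maximum). -/
noncomputable def addOf (D : Type u) [Preorder D] : Cardinal.{u} :=
  sInf {c | ∃ s : Set D, ¬(∃ b : D, ∀ x ∈ s, x ≤ b) ∧ Cardinal.mk s = c}

/-- Auxiliary transfinite recursion: given `w : K → E` on a well-ordered `K`, if every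
partial attempt can be bounded together with the relevant values of `w`, then there is
a `<`-monotone sequence `e` dominating `w` on initial segments. -/
theorem exists_monotone_dominating {K : Type u} {E : Type v} [LinearOrder K] [WellFoundedLT K]
    [Preorder E] (w : K → E)
    (H : ∀ (ξ : K) (v : {η : K // η < ξ} → E), ∃ b : E,
      (∀ η, v η ≤ b) ∧ ∀ ζ : K, ζ ≤ ξ → w ζ ≤ b) :
    ∃ e : K → E, (∀ η ξ : K, η < ξ → e η ≤ e ξ) ∧ (∀ ζ ξ : K, ζ ≤ ξ → w ζ ≤ e ξ) := by
  classical
  have wf : WellFounded ((· < ·) : K → K → Prop) := wellFounded_lt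
  let F : ∀ ξ : K, (∀ y : K, y < ξ → E) → E :=
    fun ξ ih => Classical.choose (H ξ (fun η => ih η.1 η.2))
  let e : K → E := wf.fix F
  have he : ∀ ξ : K, e ξ = F ξ (fun y _ => e y) := fun ξ => wf.fix_eq F ξ
  have spec : ∀ ξ : K,
      (∀ η : {η : K // η < ξ}, e η.1 ≤ e ξ) ∧ ∀ ζ : K, ζ ≤ ξ → w ζ ≤ e ξ := by
    intro ξ
    have h := Classical.choose_spec (H ξ (fun η : {η : K // η < ξ} => e η.1))
    rw [he ξ]
    exact h
  exact ⟨e, fun η ξ h => (spec ξ).1 ⟨η, h⟩, fun ζ ξ h => (spec ξ).2 ζ h⟩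

/-- If `X` is `T₃`, `N(p,X) ≡cf D × E`, `cf D < add E`, and `E` has
no maximum (i.e. `add E < ∞`), then there is a regular-open escape sequence at `p`
of length `add E`. -/
theorem regular_open_escape_seq_of_length_add {X : Type w} [TopologicalSpace X]
    [T3Space X] (p : X) (D E : Type u) [Preorder D] [Preorder E]
    (hnomax : ¬ ∃ m : E, ∀ x : E, x ≤ m)
    (hcf : cofOf D < addOf E)
    (heq : CofEquiv (Nbhds X p) (D × E)) :
    ∃ U : (addOf E).ord.ToType → Set X,
      IsEscapeSeq p U ∧ ∀ i, U i = interior (closure (U i)) := by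
  classical
  obtain ⟨R, le, hrefl, htrans, f, g, hfi, hgi, hf, hg, hfc, hgc⟩ := heq
  set κ : Cardinal.{u} := addOf E with hκdef
  -- a first neighborhood and a first element of `D × E`
  let nU : Nbhds X p := Subtype.mk Set.univ Filter.univ_mem
  haveI hKwf : WellFoundedLT κ.ord.ToType := wellFoundedLT_toType _
  haveI hKwo : IsWellOrder κ.ord.ToType (· < ·) := isWellOrder_lt
  obtain ⟨b0, hb0⟩ := hgc (f nU)
  let d0 : D := b0.1
  -- basic facts about `addOf E`
  have hAddNe : {c | ∃ s : Set E, ¬(∃ b : E, ∀ x ∈ s, x ≤ b) ∧ Cardinal.mk s = c}.Nonempty := by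
    refine ⟨Cardinal.mk (Set.univ : Set E), Set.univ, ?_, rfl⟩
    rintro ⟨b, hb⟩
    exact hnomax ⟨b, fun x => hb x (Set.mem_univ x)⟩
  have hκmem : κ ∈ {c | ∃ s : Set E, ¬(∃ b : E, ∀ x ∈ s, x ≤ b) ∧ Cardinal.mk s = c} :=
    csInf_mem hAddNe
  obtain ⟨s, hs_unb, hs_card⟩ := hκmem
  -- every family of size `< κ` is bounded in `E`
  have hsmall : ∀ (ι : Type u) (v : ι → E), Cardinal.mk ι < κ → ∃ b : E, ∀ i, v i ≤ b := by
    intro ι v hlt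
    by_contra hno
    push_neg at hno
    have hmem : Cardinal.mk (Set.range v) ∈
        {c | ∃ s : Set E, ¬(∃ b : E, ∀ x ∈ s, x ≤ b) ∧ Cardinal.mk s = c} := by
      refine ⟨Set.range v, ?_, rfl⟩
      rintro ⟨b, hb⟩
      obtain ⟨i, hi⟩ := hno b
      exact hi (hb (v i) ⟨i, rfl⟩)
    have h1 : κ ≤ Cardinal.mk (Set.range v) := csInf_le' hmem
    exact absurd (h1.trans Cardinal.mk_range_le) (not_le.mpr hlt)
  -- `E` is directed
  have hEdir : ∀ e1 e2 : E, ∃ e3 : E, e1 ≤ e3 ∧ e2 ≤ e3 := by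
    intro e1 e2
    obtain ⟨n1, hn1⟩ := hfc (g (d0, e1))
    obtain ⟨n2, hn2⟩ := hfc (g (d0, e2))
    let n3 : Nbhds X p := Subtype.mk (n1.1 ∩ n2.1) (Filter.inter_mem n1.2 n2.2)
    have h13 : n1 ≤ n3 := fun x hx => hx.1
    have h23 : n2 ≤ n3 := fun x hx => hx.2
    obtain ⟨b3, hb3⟩ := hgc (f n3)
    have c1 : le (g (d0, e1)) (g b3) := htrans hn1 (htrans ((hf n1 n3).mp h13) hb3)
    have c2 : le (g (d0, e2)) (g b3) := htrans hn2 (htrans ((hf n2 n3).mp h23) hb3)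
    exact ⟨b3.2, ((hg _ _).mpr c1).2, ((hg _ _).mpr c2).2⟩
  have hEne : Nonempty E := ⟨b0.2⟩
  -- `κ` is infinite
  have hκinf : Cardinal.aleph0 ≤ κ := by
    by_contra h
    push_neg at h
    have hsfin : s.Finite := by
      rw [← Cardinal.lt_aleph0_iff_set_finite]
      rw [hs_card]; exact h
    haveI : IsDirected E (· ≤ ·) := ⟨hEdir⟩
    obtain ⟨b, hb⟩ := hsfin.toFinset.exists_le
    exact hs_unb ⟨b, fun x hx => hb x (hsfin.mem_toFinset.mpr hx)⟩
  -- enumeration of the unbounded set `s` by `κ.ord.ToType`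
  have hKcard : Cardinal.mk κ.ord.ToType = κ := Cardinal.mk_ord_toType κ
  have hKequiv : Nonempty (κ.ord.ToType ≃ s) := by
    rw [← Cardinal.eq, hKcard, hs_card]
  let uE : κ.ord.ToType ≃ s := hKequiv.some
  let u : κ.ord.ToType → E := fun η => (uE η).1
  have u_surj : ∀ x ∈ s, ∃ η : κ.ord.ToType, u η = x := by
    intro x hx
    exact ⟨uE.symm ⟨x, hx⟩, by simp [u]⟩
  -- cardinality of initial segments of `κ.ord.ToType`
  have hIiolt : ∀ η : κ.ord.ToType, Cardinal.mk {ξ : κ.ord.ToType // ξ < η} < κ := by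
    intro η
    have h1 : Cardinal.mk {ξ : κ.ord.ToType // ξ < η} = (Ordinal.typein (· < ·) η).card :=
      Ordinal.card_typein η
    rw [h1]
    have h2 : Ordinal.typein ((· < ·) : κ.ord.ToType → κ.ord.ToType → Prop) η < Ordinal.type ((· < ·) : κ.ord.ToType → κ.ord.ToType → Prop) :=
      Ordinal.typein_lt_type _ η
    rw [Ordinal.type_toType] at h2
    exact Cardinal.lt_ord.mp h2
  have hIiclt : ∀ η : κ.ord.ToType, Cardinal.mk {ξ : κ.ord.ToType // ξ ≤ η} < κ := by
    intro η
    have h0 : Cardinal.mk {ξ : κ.ord.ToType // ξ ≤ η} = Cardinal.mk (Set.Iic η) := rfl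
    have h1 : Cardinal.mk (Set.Iic η) ≤ Cardinal.mk (Set.Iio η) + 1 := by
      rw [← Set.Iio_insert]
      exact Cardinal.mk_insert_le
    have h2 : Cardinal.mk (Set.Iio η) = Cardinal.mk {ξ : κ.ord.ToType // ξ < η} := rfl
    rw [h0]
    refine lt_of_le_of_lt h1 ?_
    rw [h2]
    exact Cardinal.add_lt_of_lt hκinf (hIiolt η) (lt_of_lt_of_le Cardinal.one_lt_aleph0 hκinf)
  -- bounds of initial segments of `u`
  have hu_bdd : ∀ ζ : κ.ord.ToType, ∃ b : E, ∀ η : κ.ord.ToType, η ≤ ζ → u η ≤ b := by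
    intro ζ
    obtain ⟨b, hb⟩ := hsmall {η : κ.ord.ToType // η ≤ ζ} (fun η => u η.1) (hIiclt ζ)
    exact ⟨b, fun η hη => hb ⟨η, hη⟩⟩
  let uhat : κ.ord.ToType → E := fun ζ => (hu_bdd ζ).choose
  have huhat : ∀ ζ η : κ.ord.ToType, η ≤ ζ → u η ≤ uhat ζ := fun ζ => (hu_bdd ζ).choose_spec
  -- closed shrinking of neighborhoods (uses T₃)
  have hT3 : ∀ n : Nbhds X p, ∃ m : Nbhds X p, IsClosed m.1 ∧ n ≤ m := by
    intro n
    obtain ⟨t, ht, htc, hts⟩ := exists_mem_nhds_isClosed_subset n.2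
    exact ⟨Subtype.mk t ht, htc, hts⟩
  -- the anchors `z` and their upper `g`-covers `w`
  have hz_ex : ∀ ζ : κ.ord.ToType, ∃ z : Nbhds X p, IsClosed z.1 ∧ le (g (d0, uhat ζ)) (f z) := by
    intro ζ
    obtain ⟨n0, hn0⟩ := hfc (g (d0, uhat ζ))
    obtain ⟨m, hmc, hnm⟩ := hT3 n0
    exact ⟨m, hmc, htrans hn0 ((hf n0 m).mp hnm)⟩
  let z : κ.ord.ToType → Nbhds X p := fun ζ => (hz_ex ζ).choose
  have hzc : ∀ ζ, IsClosed (z ζ).1 := fun ζ => (hz_ex ζ).choose_spec.1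
  have hz : ∀ ζ, le (g (d0, uhat ζ)) (f (z ζ)) := fun ζ => (hz_ex ζ).choose_spec.2
  let w : κ.ord.ToType → D × E := fun ζ => (hgc (f (z ζ))).choose
  have hw : ∀ ζ, le (f (z ζ)) (g (w ζ)) := fun ζ => (hgc (f (z ζ))).choose_spec
  -- a cofinal subset of `D` of size `cofOf D`
  have hCofNe : {c | ∃ s : Set D, (∀ d : D, ∃ x ∈ s, d ≤ x) ∧ Cardinal.mk s = c}.Nonempty :=
    ⟨Cardinal.mk (Set.univ : Set D), Set.univ, fun d => ⟨d, Set.mem_univ d, le_refl d⟩, rfl⟩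
  have hCofMem : cofOf D ∈ {c | ∃ s : Set D, (∀ d : D, ∃ x ∈ s, d ≤ x) ∧ Cardinal.mk s = c} :=
    csInf_mem hCofNe
  obtain ⟨C, hCcof, hCcard⟩ := hCofMem
  have hγ_ex : ∀ ζ : κ.ord.ToType, ∃ c : C, (w ζ).1 ≤ c.1 := by
    intro ζ
    obtain ⟨x, hx, hle⟩ := hCcof (w ζ).1
    exact ⟨⟨x, hx⟩, hle⟩
  let γ : κ.ord.ToType → C := fun ζ => (hγ_ex ζ).choose
  have hγ : ∀ ζ, (w ζ).1 ≤ (γ ζ).1 := fun ζ => (hγ_ex ζ).choose_spec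
  -- `κ` is regular (we only need `κ ≤ cof κ.ord`)
  have hreg : κ ≤ κ.ord.cof := by
    by_contra hlt
    push_neg at hlt
    obtain ⟨S, hSunb, hScard⟩ := Order.exists_cof_eq κ.ord.ToType
    have hScard' : Cardinal.mk S < κ := by
      rw [hScard, Ordinal.cof_toType]
      exact hlt
    obtain ⟨b, hb⟩ := hsmall S (fun i => uhat i.1) hScard'
    apply hs_unb
    refine ⟨b, fun x hx => ?_⟩
    obtain ⟨η, rfl⟩ := u_surj x hx
    obtain ⟨i, hiS, hi⟩ := hSunb η
    exact le_trans (huhat i η hi) (hb ⟨i, hiS⟩)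
  -- pigeonhole: one `cstar ∈ C` receives `κ` many indices
  obtain ⟨cstar, hcstar⟩ := Cardinal.infinite_pigeonhole γ
    (by rw [hKcard]; exact hκinf)
    (by rw [hKcard]
        exact lt_of_lt_of_le (lt_of_eq_of_lt hCcard hcf) hreg)
  have hIcof : ∀ η : κ.ord.ToType, ∃ ζ : κ.ord.ToType, γ ζ = cstar ∧ η ≤ ζ := by
    intro η
    by_contra hno
    push_neg at hno
    have hsub : γ ⁻¹' {cstar} ⊆ Set.Iio η := by
      intro ζ hζ
      exact hno ζ (Set.mem_singleton_iff.mp hζ)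
    have h1 : Cardinal.mk (γ ⁻¹' {cstar}) ≤ Cardinal.mk (Set.Iio η) :=
      Cardinal.mk_le_mk_of_subset hsub
    rw [hcstar, hKcard] at h1
    exact absurd (lt_of_le_of_lt h1 (hIiolt η)) (lt_irrefl κ)
  -- the monotone `e`-sequence dominating the second coordinates of `w`
  have HH : ∀ (ξ : κ.ord.ToType) (v : {η : κ.ord.ToType // η < ξ} → E), ∃ b : E,
      (∀ η, v η ≤ b) ∧ ∀ ζ : κ.ord.ToType, ζ ≤ ξ → (fun ζ : κ.ord.ToType => (w ζ).2) ζ ≤ b := by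
    intro ξ v
    have hcard : Cardinal.mk ({η : κ.ord.ToType // η < ξ} ⊕ {ζ : κ.ord.ToType // ζ ≤ ξ}) < κ := by
      rw [Cardinal.mk_sum]
      simp only [Cardinal.lift_id]
      exact Cardinal.add_lt_of_lt hκinf (hIiolt ξ) (hIiclt ξ)
    obtain ⟨b, hb⟩ := hsmall ({η : κ.ord.ToType // η < ξ} ⊕ {ζ : κ.ord.ToType // ζ ≤ ξ})
      (Sum.elim v (fun ζ => (w ζ.1).2)) hcard
    exact ⟨b, fun η => hb (Sum.inl η), fun ζ hζ => hb (Sum.inr ⟨ζ, hζ⟩)⟩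
  obtain ⟨e, hemonolt, hew⟩ := exists_monotone_dominating (fun ζ : κ.ord.ToType => (w ζ).2) HH
  have hemono : ∀ η ξ : κ.ord.ToType, η ≤ ξ → e η ≤ e ξ := by
    intro η ξ h
    rcases h.lt_or_eq with h' | h'
    · exact hemonolt η ξ h'
    · rw [h']
  -- the sets `Sξ`, `M`, `U`
  set Sξ : κ.ord.ToType → Set (Nbhds X p) :=
    fun ξ => {n : Nbhds X p | IsClosed n.1 ∧ le (f n) (g (cstar.1, e ξ))} with hSξdef
  set M : κ.ord.ToType → Set X :=
    fun ξ => ⋃₀ {W : Set X | W ∈ nhds p ∧ ∀ n ∈ Sξ ξ, W ⊆ n.1} with hMdef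
  set U : κ.ord.ToType → Set X := fun ξ => interior (closure (M ξ)) with hUdef
  -- `M ξ` is a neighborhood: it contains an upper bound of `Sξ ξ`
  have hbb : ∀ ξ : κ.ord.ToType, ∃ m : Nbhds X p, le (g (cstar.1, e ξ)) (f m) := fun ξ => hfc _
  have hMnhds : ∀ ξ, M ξ ∈ nhds p := by
    intro ξ
    obtain ⟨bbξ, hbbξ⟩ := hbb ξ
    have hmem : bbξ.1 ∈ {W : Set X | W ∈ nhds p ∧ ∀ n ∈ Sξ ξ, W ⊆ n.1} := by
      refine ⟨bbξ.2, ?_⟩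
      intro n hn
      have : n ≤ bbξ := (hf n bbξ).mpr (htrans hn.2 hbbξ)
      exact this
    exact Filter.mem_of_superset bbξ.2 (Set.subset_sUnion_of_mem hmem)
  have hUnhds : ∀ ξ, U ξ ∈ nhds p := by
    intro ξ
    have h1 : p ∈ interior (M ξ) := mem_interior_iff_mem_nhds.mpr (hMnhds ξ)
    have h2 : interior (M ξ) ⊆ U ξ := interior_mono subset_closure
    exact isOpen_interior.mem_nhds (h2 h1)
  -- monotonicity
  have hSmono : ∀ ξ ξ' : κ.ord.ToType, ξ ≤ ξ' → Sξ ξ ⊆ Sξ ξ' := by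
    intro ξ ξ' h n hn
    refine ⟨hn.1, htrans hn.2 ((hg _ _).mp ?_)⟩
    exact ⟨le_refl cstar.1, hemono ξ ξ' h⟩
  have hManti : ∀ ξ ξ' : κ.ord.ToType, ξ ≤ ξ' → M ξ' ⊆ M ξ := by
    intro ξ ξ' h
    apply Set.sUnion_subset_sUnion
    intro W hW
    exact ⟨hW.1, fun n hn => hW.2 n (hSmono ξ ξ' h hn)⟩
  have hUanti : ∀ ξ ξ' : κ.ord.ToType, ξ ≤ ξ' → U ξ' ⊆ U ξ := by
    intro ξ ξ' h
    exact interior_mono (closure_mono (hManti ξ ξ' h))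
  -- `U ξ` is contained in every member of `Sξ ξ`
  have hUsub : ∀ ξ : κ.ord.ToType, ∀ n ∈ Sξ ξ, U ξ ⊆ n.1 := by
    intro ξ n hn
    have hM : M ξ ⊆ n.1 := Set.sUnion_subset (fun W hW => hW.2 n hn)
    have hcl : closure (M ξ) ⊆ n.1 := closure_minimal hM hn.1
    exact interior_subset.trans hcl
  -- the anchors lie in the relevant `Sξ`
  have hzS : ∀ ζ ξ : κ.ord.ToType, γ ζ = cstar → ζ ≤ ξ → z ζ ∈ Sξ ξ := by
    intro ζ ξ hγζ hle'
    refine ⟨hzc ζ, htrans (hw ζ) ((hg _ _).mp ?_)⟩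
    constructor
    · have h := hγ ζ
      rw [hγζ] at h
      exact h
    · exact hew ζ ξ hle'
  -- conclusion
  refine ⟨U, ⟨hUnhds, fun i j hij => hUanti i j hij, ?_⟩, ?_⟩
  · -- the intersection is not a neighborhood
    intro hmem
    let nstar : Nbhds X p := Subtype.mk (⋂ ξ, U ξ) hmem
    obtain ⟨bstar, hbstar⟩ := hgc (f nstar)
    apply hs_unb
    refine ⟨bstar.2, fun x hx => ?_⟩
    obtain ⟨η, rfl⟩ := u_surj x hx
    obtain ⟨ζ, hζI, hηζ⟩ := hIcof η
    have h1 : z ζ ≤ nstar := by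
      have hsub : (⋂ ξ, U ξ) ⊆ (z ζ).1 :=
        (Set.iInter_subset U ζ).trans (hUsub ζ (z ζ) (hzS ζ ζ hζI (le_refl ζ)))
      exact hsub
    have h2 : le (g (d0, uhat ζ)) (g bstar) :=
      htrans (hz ζ) (htrans ((hf _ _).mp h1) hbstar)
    have h3 : (d0, uhat ζ) ≤ bstar := (hg _ _).mpr h2
    exact le_trans (huhat ζ η hηζ) h3.2
  · -- each `U ξ` is regular open
    intro ξ
    have h1 : U ξ ⊆ interior (closure (U ξ)) :=
      interior_maximal subset_closure isOpen_interior
    have h2 : interior (closure (U ξ)) ⊆ U ξ := by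
      have hcl : closure (U ξ) ⊆ closure (M ξ) :=
        closure_minimal interior_subset isClosed_closure
      exact interior_mono hcl
    exact Set.Subset.antisymm h1 h2
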